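/- There exists a constant c > 0 such that the following holds. Let V be a finite type, G a simple graph on V, and d a natural number with 1 ≤ d and the maximum degree of G at most d. Let p : V → EuclideanSpace ℝ (Fin 3) be any injective map with p v 2 = 0 for every v, and let n denote the unit vector (0,0,1). For a unit vector u = (x, y, 0) in the base plane, write J u = (−y, x, 0) for its rotation by π/2 within the base plane. Then there exist assignments α, β : Sym2 V → ℝ with α e, β e ∈ [0, π/4] for every e, such that for every vertex v and every pair of distinct neighbors u, w of v, the vectors T(v,u) = cos(α_e) • û + sin(α_e) • (cos(β_e) • (J û) + sin(β_e) • n), where e = ⟦(v,u)⟧ and û = ‖p u − p v‖⁻¹ • (p u − p v), and the analogously defined T(v,w), form an angle of at least c/√d. -/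

import Mathlib

open Real InnerProductGeometry

/-- Rotation by `π / 2` within the base plane `z = 0`:
`J (x, y, 0) = (-y, x, 0)` (applied to any vector, using its first two
coordinates). -/
noncomputable def rotInBasePlane (u : EuclideanSpace ℝ (Fin 3)) :
    EuclideanSpace ℝ (Fin 3) :=
  (WithLp.equiv 2 (Fin 3 → ℝ)).symm ![-(u 1), u 0, 0]

/-- The unit tangent vector at `p v` of the slanted circular arc drawn
over the segment from `p v` to `p u`, in the plane through the two
endpoints making angle `β e` with the base plane, the arc making angle
`α e` with the segment at its endpoints (`e = s(v, u)`). -/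
noncomputable def slantedArcTangentVec {V : Type*}
    (p : V → EuclideanSpace ℝ (Fin 3)) (α β : Sym2 V → ℝ)
    (nvec : EuclideanSpace ℝ (Fin 3)) (v u : V) :
    EuclideanSpace ℝ (Fin 3) :=
  Real.cos (α s(v, u)) • (‖p u - p v‖⁻¹ • (p u - p v)) +
    Real.sin (α s(v, u)) •
      (Real.cos (β s(v, u)) • rotInBasePlane (‖p u - p v‖⁻¹ • (p u - p v)) +
        Real.sin (β s(v, u)) • nvec)

lemma one_le_abs_natcast_sub {i j : ℕ} (h : i ≠ j) : (1:ℝ) ≤ |(i:ℝ) - (j:ℝ)| := by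
  have h1 : 1 ≤ |(i:ℤ) - (j:ℤ)| := Int.one_le_abs (sub_ne_zero.mpr (by exact_mod_cast h))
  have h2 : ((|(i:ℤ) - (j:ℤ)| : ℤ) : ℝ) = |(i:ℝ) - (j:ℝ)| := by
    push_cast [Int.cast_abs]
    ring_nf
  exact_mod_cast h2 ▸ (by exact_mod_cast h1 : (1:ℝ) ≤ ((|(i:ℤ) - (j:ℤ)| : ℤ) : ℝ))

-- helper: sin x ≥ x/2 on [0,1]
lemma sin_ge_half {x : ℝ} (h0 : 0 ≤ x) (h1 : x ≤ 1) : x / 2 ≤ Real.sin x := by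
  rcases eq_or_lt_of_le h0 with h | h
  · simp [← h]
  · have := Real.sin_gt_sub_cube h
    nlinarith [pow_le_pow_left₀ h0 h1 3, sq_nonneg x]

lemma abs_sin_ge {x : ℝ} (h : |x| ≤ 1) : |x| / 2 ≤ |Real.sin x| := by
  rcases le_or_gt 0 x with hx | hx
  · rw [abs_of_nonneg hx, abs_of_nonneg (Real.sin_nonneg_of_nonneg_of_le_pi hx (by
      rw [abs_of_nonneg hx] at h; linarith [Real.pi_gt_three]))]
    exact sin_ge_half hx (by rwa [abs_of_nonneg hx] at h)
  · rw [abs_of_neg hx, abs_of_nonpos (by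
      have : Real.sin (-x) ≥ 0 := Real.sin_nonneg_of_nonneg_of_le_pi (by linarith) (by
        rw [abs_of_neg hx] at h; linarith [Real.pi_gt_three])
      simpa using this)]
    rw [← Real.sin_neg]
    exact sin_ge_half (by linarith) (by rwa [abs_of_neg hx] at h)

lemma cos_ge_23 {x : ℝ} (h : |x| ≤ 1 / 2) : (2 : ℝ) / 3 ≤ Real.cos x := by
  have := Real.one_sub_sq_div_two_le_cos (x := x)
  have h2 : x ^ 2 ≤ (1/2)^2 := by
    rw [← sq_abs]; exact pow_le_pow_left₀ (abs_nonneg x) h 2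
  nlinarith

-- |cos α - cos α'| ≥ |α-α'|/12 for α,α' ∈ [π/8, π/4]
lemma sepA {a a' : ℝ} (h1 : π/8 ≤ a) (h2 : a ≤ π/4) (h1' : π/8 ≤ a') (h2' : a' ≤ π/4) :
    |a - a'| / 12 ≤ |Real.cos a - Real.cos a'| := by
  have hpi : (3.14 : ℝ) < π := by linarith [Real.pi_gt_d6]
  have hpi4 : π ≤ 3.15 := by linarith [Real.pi_lt_d2]
  rw [Real.cos_sub_cos]
  have hmid : π/8 ≤ (a + a')/2 := by linarith
  have hmid2 : (a + a')/2 ≤ π/4 := by linarith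
  have hs1 : (a + a')/2 / 2 ≤ Real.sin ((a + a')/2) :=
    sin_ge_half (by linarith) (by linarith)
  have hs2 : |(a - a')/2| / 2 ≤ |Real.sin ((a - a')/2)| := abs_sin_ge (by
    rw [abs_div]; rw [abs_of_pos (by norm_num : (0:ℝ) < 2)]
    have : |a - a'| ≤ π/8 := by rw [abs_le]; constructor <;> linarith
    linarith)
  have hsin_pos : 0 ≤ Real.sin ((a + a')/2) := by linarith
  rw [abs_mul, abs_mul]
  rw [abs_of_nonneg hsin_pos]
  have : |(-2 : ℝ)| = 2 := by norm_num
  rw [this]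
  have hAD : |(a - a')/2| = |a - a'|/2 := by rw [abs_div]; norm_num
  rw [hAD] at hs2
  nlinarith [abs_nonneg (a - a'), abs_nonneg (Real.sin ((a-a')/2))]

-- |sin β - sin β'| ≥ |β-β'|/3 for β,β' ∈ [0, π/8]
lemma sepB {b b' : ℝ} (h1 : 0 ≤ b) (h2 : b ≤ π/8) (h1' : 0 ≤ b') (h2' : b' ≤ π/8) :
    |b - b'| / 3 ≤ |Real.sin b - Real.sin b'| := by
  have hpi : (3.14 : ℝ) < π := by linarith [Real.pi_gt_d6]
  have hpi4 : π ≤ 3.15 := by linarith [Real.pi_lt_d2]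
  rw [Real.sin_sub_sin]
  have hc : (2:ℝ)/3 ≤ Real.cos ((b + b')/2) := cos_ge_23 (by
    rw [abs_of_nonneg (by linarith)]; linarith)
  have hs2 : |(b - b')/2| / 2 ≤ |Real.sin ((b - b')/2)| := abs_sin_ge (by
    rw [abs_div, abs_of_pos (by norm_num : (0:ℝ) < 2)]
    have : |b - b'| ≤ π/8 := by rw [abs_le]; constructor <;> linarith
    linarith)
  rw [abs_mul, abs_mul, abs_of_nonneg (by linarith : (0:ℝ) ≤ Real.cos ((b + b')/2))]
  have h2' : |(2 : ℝ)| = 2 := by norm_num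
  rw [h2']
  have hAD : |(b - b')/2| = |b - b'|/2 := by rw [abs_div]; norm_num
  rw [hAD] at hs2
  nlinarith [abs_nonneg (b - b'), abs_nonneg (Real.sin ((b-b')/2))]

-- Lipschitz: |sin a - sin a'| ≤ |a - a'|
lemma sepC (a a' : ℝ) : |Real.sin a - Real.sin a'| ≤ |a - a'| := by
  rw [Real.sin_sub_sin, abs_mul, abs_mul]
  have h1 : |Real.sin ((a - a')/2)| ≤ |(a - a')/2| := Real.abs_sin_le_abs
  have h2 : |Real.cos ((a + a')/2)| ≤ 1 := Real.abs_cos_le_one _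
  have hAD : |(a - a')/2| = |a - a'|/2 := by rw [abs_div]; norm_num
  rw [hAD] at h1
  have h3 : |(2:ℝ)| = 2 := by norm_num
  rw [h3]
  nlinarith [abs_nonneg (Real.sin ((a - a')/2)), abs_nonneg (a - a')]

lemma sepMain {a a' b b' : ℝ} (h1 : π/8 ≤ a) (h2 : a ≤ π/4) (h1' : π/8 ≤ a') (h2' : a' ≤ π/4)
    (k1 : 0 ≤ b) (k2 : b ≤ π/8) (k1' : 0 ≤ b') (k2' : b' ≤ π/8) :
    max |a - a'| |b - b'| / 432 ≤ |Real.cos a - Real.cos a'| ∨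
    max |a - a'| |b - b'| / 432 ≤ |Real.sin a * Real.sin b - Real.sin a' * Real.sin b'| := by
  have hpi : (3.14 : ℝ) < π := by linarith [Real.pi_gt_d6]
  have hpi4 : π ≤ 3.15 := by linarith [Real.pi_lt_d2]
  set M := max |a - a'| |b - b'| with hM
  rcases le_or_gt (|b - b'| / 36) |a - a'| with hc | hc
  · left
    have hA := sepA h1 h2 h1' h2'
    have hMle : M ≤ 36 * |a - a'| := by
      apply max_le (by nlinarith [abs_nonneg (a - a')]) (by linarith)
    linarith
  · right
    have hMeq : M = |b - b'| := by
      apply max_eq_right; nlinarith [abs_nonneg (b - b')]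
    have hsa : (1:ℝ)/6 ≤ Real.sin a := by
      have := sin_ge_half (x := a) (by linarith) (by linarith)
      linarith
    have hsb : |Real.sin b - Real.sin b'| ≥ |b - b'| / 3 := sepB k1 k2 k1' k2'
    have hsa' : |Real.sin a - Real.sin a'| ≤ |a - a'| := sepC a a'
    have hsb1 : |Real.sin b'| ≤ 1 := Real.abs_sin_le_one _
    have key : Real.sin a * Real.sin b - Real.sin a' * Real.sin b' =
        Real.sin a * (Real.sin b - Real.sin b') + (Real.sin a - Real.sin a') * Real.sin b' := by
      ring
    rw [key, hMeq]
    have htri : |Real.sin a * (Real.sin b - Real.sin b')| - |(Real.sin a - Real.sin a') * Real.sin b'|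
        ≤ |Real.sin a * (Real.sin b - Real.sin b') + (Real.sin a - Real.sin a') * Real.sin b'| := by
      have h0 := abs_sub_abs_le_abs_sub (Real.sin a * (Real.sin b - Real.sin b'))
        (-((Real.sin a - Real.sin a') * Real.sin b'))
      rw [abs_neg, sub_neg_eq_add] at h0
      exact h0
    rw [abs_mul, abs_mul] at htri
    have h1s : |Real.sin a| = Real.sin a := abs_of_nonneg (by linarith)
    rw [h1s] at htri
    have t1 : Real.sin a * |Real.sin b - Real.sin b'| ≥ (1/6) * (|b - b'|/3) := by
      apply mul_le_mul hsa (by linarith) (by positivity) (by linarith)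
    have t2 : |Real.sin a - Real.sin a'| * |Real.sin b'| ≤ |a - a'| := by
      nlinarith [abs_nonneg (Real.sin a - Real.sin a'), abs_nonneg (Real.sin b')]
    nlinarith [abs_nonneg (b - b')]

lemma norm_sq_eq3 (z : EuclideanSpace ℝ (Fin 3)) :
    ‖z‖^2 = (z 0)^2 + (z 1)^2 + (z 2)^2 := by
  rw [EuclideanSpace.norm_eq, Real.sq_sqrt (by positivity)]
  simp [Fin.sum_univ_three, Real.norm_eq_abs, sq_abs]

noncomputable def Fvec (w : EuclideanSpace ℝ (Fin 3)) (a b : ℝ) : EuclideanSpace ℝ (Fin 3) :=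
  Real.cos a • w + Real.sin a • (Real.cos b • rotInBasePlane w + Real.sin b • EuclideanSpace.single (2 : Fin 3) (1:ℝ))

lemma Fvec_apply0 (w : EuclideanSpace ℝ (Fin 3)) (a b : ℝ) :
    Fvec w a b 0 = Real.cos a * w 0 - Real.sin a * Real.cos b * w 1 := by
  simp [Fvec, rotInBasePlane, EuclideanSpace.single_apply]
  ring

lemma Fvec_apply1 (w : EuclideanSpace ℝ (Fin 3)) (a b : ℝ) :
    Fvec w a b 1 = Real.cos a * w 1 + Real.sin a * Real.cos b * w 0 := by
  simp [Fvec, rotInBasePlane, EuclideanSpace.single_apply]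
  ring

lemma Fvec_apply2 (w : EuclideanSpace ℝ (Fin 3)) (a b : ℝ) (hw : w 2 = 0) :
    Fvec w a b 2 = Real.sin a * Real.sin b := by
  simp [Fvec, rotInBasePlane, EuclideanSpace.single_apply, hw]

lemma norm_Fvec (w : EuclideanSpace ℝ (Fin 3)) (hw : ‖w‖ = 1) (hw2 : w 2 = 0) (a b : ℝ) :
    ‖Fvec w a b‖ = 1 := by
  have hxy : (w 0)^2 + (w 1)^2 = 1 := by
    have := norm_sq_eq3 w
    rw [hw, hw2] at this; nlinarith
  have h : ‖Fvec w a b‖^2 = 1 := by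
    rw [norm_sq_eq3, Fvec_apply0, Fvec_apply1, Fvec_apply2 w a b hw2]
    linear_combination (Real.cos a^2 + (Real.sin a * Real.cos b)^2) * hxy +
      (Real.sin a)^2 * Real.sin_sq_add_cos_sq b + Real.sin_sq_add_cos_sq a
  nlinarith [norm_nonneg (Fvec w a b)]

lemma norm_Fvec_sub (w : EuclideanSpace ℝ (Fin 3)) (hw : ‖w‖ = 1) (hw2 : w 2 = 0)
    (a b a' b' : ℝ) :
    ‖Fvec w a b - Fvec w a' b'‖^2 =
      (Real.cos a - Real.cos a')^2 + (Real.sin a * Real.cos b - Real.sin a' * Real.cos b')^2 +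
        (Real.sin a * Real.sin b - Real.sin a' * Real.sin b')^2 := by
  have hxy : (w 0)^2 + (w 1)^2 = 1 := by
    have := norm_sq_eq3 w
    rw [hw, hw2] at this; nlinarith
  rw [norm_sq_eq3]
  have e0 : (Fvec w a b - Fvec w a' b') 0 = Fvec w a b 0 - Fvec w a' b' 0 := rfl
  have e1 : (Fvec w a b - Fvec w a' b') 1 = Fvec w a b 1 - Fvec w a' b' 1 := rfl
  have e2 : (Fvec w a b - Fvec w a' b') 2 = Fvec w a b 2 - Fvec w a' b' 2 := rfl
  rw [e0, e1, e2, Fvec_apply0, Fvec_apply1, Fvec_apply2 w a b hw2,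
    Fvec_apply0, Fvec_apply1, Fvec_apply2 w a' b' hw2]
  linear_combination ((Real.cos a - Real.cos a')^2 +
    (Real.sin a * Real.cos b - Real.sin a' * Real.cos b')^2) * hxy

open InnerProductGeometry in
lemma norm_sub_le_angle (x y : EuclideanSpace ℝ (Fin 3)) (hx : ‖x‖ = 1) (hy : ‖y‖ = 1) :
    ‖x - y‖ ≤ angle x y := by
  have hcos : Real.cos (angle x y) = (inner ℝ x y : ℝ) := by
    rw [cos_angle, hx, hy]; simp
  have hsq : ‖x - y‖^2 = 2 - 2 * (inner ℝ x y : ℝ) := by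
    rw [@norm_sub_sq_real, hx, hy]; ring
  have hb := Real.one_sub_sq_div_two_le_cos (x := angle x y)
  have h0 := angle_nonneg x y
  nlinarith [norm_nonneg (x - y)]

lemma tang_sep (w : EuclideanSpace ℝ (Fin 3)) (hw : ‖w‖ = 1) (hw2 : w 2 = 0)
    {a b a' b' : ℝ} (h1 : π/8 ≤ a) (h2 : a ≤ π/4) (h1' : π/8 ≤ a') (h2' : a' ≤ π/4)
    (k1 : 0 ≤ b) (k2 : b ≤ π/8) (k1' : 0 ≤ b') (k2' : b' ≤ π/8) :
    max |a - a'| |b - b'| / 432 ≤ ‖Fvec w a b - Fvec w a' b'‖ := by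
  have hns := norm_Fvec_sub w hw hw2 a b a' b'
  have hM0 : 0 ≤ max |a - a'| |b - b'| / 432 := by positivity
  rcases sepMain h1 h2 h1' h2' k1 k2 k1' k2' with h | h
  · nlinarith [sq_nonneg (Real.sin a * Real.cos b - Real.sin a' * Real.cos b'),
      sq_nonneg (Real.sin a * Real.sin b - Real.sin a' * Real.sin b'),
      norm_nonneg (Fvec w a b - Fvec w a' b'), abs_nonneg (Real.cos a - Real.cos a'),
      sq_abs (Real.cos a - Real.cos a')]
  · nlinarith [sq_nonneg (Real.sin a * Real.cos b - Real.sin a' * Real.cos b'),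
      sq_nonneg (Real.cos a - Real.cos a'),
      norm_nonneg (Fvec w a b - Fvec w a' b'),
      abs_nonneg (Real.sin a * Real.sin b - Real.sin a' * Real.sin b'),
      sq_abs (Real.sin a * Real.sin b - Real.sin a' * Real.sin b')]

open Finset SimpleGraph in
set_option maxHeartbeats 1000000 in
/-- Theorem 4 of the paper: there is a constant `c > 0` such that for any
graph `G` of maximum degree at most `d ≥ 1` and any injective placement
of its vertices in the base plane `z = 0`, one can choose angles
`α e, β e ∈ [0, π/4]` so that the resulting slanted 3D arc diagram has
angular resolution at least `c / √d`. -/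
theorem exists_slanted_arc_diagram_angular_resolution :
    ∃ c : ℝ, 0 < c ∧
      ∀ (V : Type) [Fintype V] (G : SimpleGraph V) [DecidableRel G.Adj] (d : ℕ),
        1 ≤ d → G.maxDegree ≤ d →
        ∀ p : V → EuclideanSpace ℝ (Fin 3), Function.Injective p →
          (∀ v, p v 2 = 0) →
          ∃ α β : Sym2 V → ℝ,
            (∀ e, α e ∈ Set.Icc 0 (π / 4)) ∧
            (∀ e, β e ∈ Set.Icc 0 (π / 4)) ∧
            ∀ v u w : V, G.Adj v u → G.Adj v w → u ≠ w →
              c / Real.sqrt d ≤ angle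
                (slantedArcTangentVec p α β (EuclideanSpace.single 2 1) v u)
                (slantedArcTangentVec p α β (EuclideanSpace.single 2 1) v w) := by
  refine ⟨1/10000, by norm_num, ?_⟩
  intro V _ G _ d hd hmax p hp hp0
  classical
  have hπ3 : (3.14:ℝ) < π := by linarith [Real.pi_gt_d6]
  set m : ℕ := Nat.sqrt (2*d) + 1 with hm
  have hm0 : 0 < m := Nat.succ_pos _
  have hm0' : (0:ℝ) < m := by exact_mod_cast hm0
  set δ : ℝ := π / (8*m) with hδ
  have hδ0 : 0 < δ := by positivity
  set A : ℕ × ℕ → ℝ := fun c => π/8 + c.1 * δ with hA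
  set B : ℕ × ℕ → ℝ := fun c => c.2 * δ with hB
  set grid : Finset (ℕ × ℕ) := Finset.range (m+1) ×ˢ Finset.range (m+1) with hgrid
  have hgridmem : ∀ c : ℕ × ℕ, c ∈ grid → c.1 ≤ m ∧ c.2 ≤ m := by
    intro c hc
    rw [hgrid, Finset.mem_product, Finset.mem_range, Finset.mem_range] at hc
    omega
  have hmδ : (m:ℝ) * δ = π/8 := by
    rw [hδ]; field_simp
  have hAr : ∀ c ∈ grid, π/8 ≤ A c ∧ A c ≤ π/4 := by
    intro c hc
    obtain ⟨h1, _⟩ := hgridmem c hc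
    have h1' : (c.1:ℝ) ≤ m := by exact_mod_cast h1
    have : (c.1:ℝ) * δ ≤ (m:ℝ) * δ := by nlinarith
    constructor
    · rw [hA]; simp only; nlinarith [mul_nonneg (Nat.cast_nonneg c.1) hδ0.le]
    · rw [hA]; simp only; nlinarith [hmδ]
  have hBr : ∀ c ∈ grid, 0 ≤ B c ∧ B c ≤ π/8 := by
    intro c hc
    obtain ⟨_, h2⟩ := hgridmem c hc
    have h2' : (c.2:ℝ) ≤ m := by exact_mod_cast h2
    constructor
    · rw [hB]; exact mul_nonneg (Nat.cast_nonneg c.2) hδ0.le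
    · rw [hB]; simp only; nlinarith [hmδ]
  -- unit direction facts
  have hwdir : ∀ v u : V, G.Adj v u →
      ‖(‖p u - p v‖⁻¹ • (p u - p v) : EuclideanSpace ℝ (Fin 3))‖ = 1 ∧
      ((‖p u - p v‖⁻¹ • (p u - p v) : EuclideanSpace ℝ (Fin 3))) 2 = 0 := by
    intro v u hadj
    have hne : p u - p v ≠ 0 := by
      intro h
      exact hadj.ne (hp (by rwa [sub_eq_zero] at h)).symm
    constructor
    · exact norm_smul_inv_norm hne
    · show ‖p u - p v‖⁻¹ * ((p u - p v) 2) = 0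
      have : (p u - p v) 2 = p u 2 - p v 2 := rfl
      rw [this, hp0, hp0]; ring
  -- separation of distinct grid colors on the same direction
  have hsep : ∀ v u : V, G.Adj v u → ∀ c c' : ℕ × ℕ, c ∈ grid → c' ∈ grid → c ≠ c' →
      δ/432 ≤ ‖Fvec (‖p u - p v‖⁻¹ • (p u - p v)) (A c) (B c) -
        Fvec (‖p u - p v‖⁻¹ • (p u - p v)) (A c') (B c')‖ := by
    intro v u hadj c c' hc hc' hne
    obtain ⟨hw1, hw2⟩ := hwdir v u hadj
    obtain ⟨hA1, hA2⟩ := hAr c hc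
    obtain ⟨hA1', hA2'⟩ := hAr c' hc'
    obtain ⟨hB1, hB2⟩ := hBr c hc
    obtain ⟨hB1', hB2'⟩ := hBr c' hc'
    have hts := tang_sep _ hw1 hw2 hA1 hA2 hA1' hA2' hB1 hB2 hB1' hB2'
    have hMδ : δ ≤ max |A c - A c'| |B c - B c'| := by
      have hij : c.1 ≠ c'.1 ∨ c.2 ≠ c'.2 := by
        by_contra h
        push_neg at h
        exact hne (Prod.ext h.1 h.2)
      rcases hij with h | h
      · refine le_trans ?_ (le_max_left _ _)
        have h1 := one_le_abs_natcast_sub h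
        have hAc : A c - A c' = ((c.1:ℝ) - (c'.1:ℝ)) * δ := by simp only [hA]; ring
        rw [hAc, abs_mul, abs_of_pos hδ0]
        nlinarith
      · refine le_trans ?_ (le_max_right _ _)
        have h1 := one_le_abs_natcast_sub h
        have hBc : B c - B c' = ((c.2:ℝ) - (c'.2:ℝ)) * δ := by simp only [hB]; ring
        rw [hBc, abs_mul, abs_of_pos hδ0]
        nlinarith
    calc δ/432 ≤ max |A c - A c'| |B c - B c'| / 432 := by linarith
      _ ≤ _ := hts

  -- greedy coloring
  have key : ∀ s : Finset (Sym2 V), ↑s ⊆ G.edgeSet →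
      ∃ f : Sym2 V → ℕ × ℕ, (∀ e, f e ∈ grid) ∧
        ∀ v u w : V, G.Adj v u → G.Adj v w → u ≠ w → s(v, u) ∈ s → s(v, w) ∈ s →
          δ/864 ≤ ‖Fvec (‖p u - p v‖⁻¹ • (p u - p v)) (A (f s(v, u))) (B (f s(v, u))) -
            Fvec (‖p w - p v‖⁻¹ • (p w - p v)) (A (f s(v, w))) (B (f s(v, w)))‖ := by
    intro s
    induction s using Finset.induction_on with
    | empty =>
      intro _
      refine ⟨fun _ => (0, 0), fun _ => by simp [hgrid], fun v u w _ _ _ h _ => absurd h (by simp)⟩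
    | @insert e s he ih =>
      intro hsub
      obtain ⟨a, b, rfl⟩ : ∃ a b, e = s(a, b) :=
        Sym2.ind (fun x y => ⟨x, y, rfl⟩) e
      have hsub' : ↑s ⊆ G.edgeSet := fun x hx => hsub (by simp [hx])
      have hab : G.Adj a b := by
        have h0 : s(a, b) ∈ G.edgeSet := hsub (by simp)
        rwa [SimpleGraph.mem_edgeSet] at h0
      obtain ⟨f, hfgrid, hfinv⟩ := ih hsub'
      -- the filter of grid colors close to a fixed vector has at most one element
      have hfilter1 : ∀ (v u : V), G.Adj v u → ∀ q : EuclideanSpace ℝ (Fin 3),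
          (grid.filter (fun c =>
            ‖Fvec (‖p u - p v‖⁻¹ • (p u - p v)) (A c) (B c) - q‖ < δ/864)).card ≤ 1 := by
        intro v u hadj q
        rw [Finset.card_le_one]
        intro c1 h1 c2 h2
        rw [Finset.mem_filter] at h1 h2
        by_contra hcne
        have hs2 := hsep v u hadj c1 c2 h1.1 h2.1 hcne
        have htri : ‖Fvec (‖p u - p v‖⁻¹ • (p u - p v)) (A c1) (B c1) -
            Fvec (‖p u - p v‖⁻¹ • (p u - p v)) (A c2) (B c2)‖ ≤
            ‖Fvec (‖p u - p v‖⁻¹ • (p u - p v)) (A c1) (B c1) - q‖ +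
            ‖Fvec (‖p u - p v‖⁻¹ • (p u - p v)) (A c2) (B c2) - q‖ := by
          have h0 := norm_sub_le (Fvec (‖p u - p v‖⁻¹ • (p u - p v)) (A c1) (B c1) - q)
            (Fvec (‖p u - p v‖⁻¹ • (p u - p v)) (A c2) (B c2) - q)
          have he0 : (Fvec (‖p u - p v‖⁻¹ • (p u - p v)) (A c1) (B c1) - q) -
              (Fvec (‖p u - p v‖⁻¹ • (p u - p v)) (A c2) (B c2) - q) =
              Fvec (‖p u - p v‖⁻¹ • (p u - p v)) (A c1) (B c1) -
              Fvec (‖p u - p v‖⁻¹ • (p u - p v)) (A c2) (B c2) := by abel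
          rwa [he0] at h0
        linarith [h1.2, h2.2]
      set Na : Finset V := (G.neighborFinset a).filter (fun x => s(a, x) ∈ s) with hNadef
      set Nb : Finset V := (G.neighborFinset b).filter (fun x => s(b, x) ∈ s) with hNbdef
      set badA : Finset (ℕ × ℕ) := Na.biUnion (fun x => grid.filter (fun c =>
        ‖Fvec (‖p b - p a‖⁻¹ • (p b - p a)) (A c) (B c) -
          Fvec (‖p x - p a‖⁻¹ • (p x - p a)) (A (f s(a, x))) (B (f s(a, x)))‖ < δ/864)) with hbadA
      set badB : Finset (ℕ × ℕ) := Nb.biUnion (fun x => grid.filter (fun c =>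
        ‖Fvec (‖p a - p b‖⁻¹ • (p a - p b)) (A c) (B c) -
          Fvec (‖p x - p b‖⁻¹ • (p x - p b)) (A (f s(b, x))) (B (f s(b, x)))‖ < δ/864)) with hbadB
      have hNacard : Na.card + 1 ≤ d := by
        have hba : b ∈ G.neighborFinset a := by
          rw [SimpleGraph.mem_neighborFinset]; exact hab
        have h1 : Na ⊆ (G.neighborFinset a).erase b := by
          intro x hx
          rw [hNadef, Finset.mem_filter] at hx
          rw [Finset.mem_erase]
          refine ⟨fun hxb => he ?_, hx.1⟩
          rw [← hxb]; exact hx.2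
        have h2 := Finset.card_le_card h1
        rw [Finset.card_erase_of_mem hba] at h2
        have h3 : (G.neighborFinset a).card ≤ d := by
          rw [G.card_neighborFinset_eq_degree]
          exact le_trans (G.degree_le_maxDegree a) hmax
        have h4 : 1 ≤ (G.neighborFinset a).card := Finset.card_pos.mpr ⟨b, hba⟩
        omega
      have hNbcard : Nb.card + 1 ≤ d := by
        have hba : a ∈ G.neighborFinset b := by
          rw [SimpleGraph.mem_neighborFinset]; exact hab.symm
        have h1 : Nb ⊆ (G.neighborFinset b).erase a := by
          intro x hx
          rw [hNbdef, Finset.mem_filter] at hx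
          rw [Finset.mem_erase]
          refine ⟨fun hxb => he ?_, hx.1⟩
          rw [← hxb]
          rw [Sym2.eq_swap]
          exact hx.2
        have h2 := Finset.card_le_card h1
        rw [Finset.card_erase_of_mem hba] at h2
        have h3 : (G.neighborFinset b).card ≤ d := by
          rw [G.card_neighborFinset_eq_degree]
          exact le_trans (G.degree_le_maxDegree b) hmax
        have h4 : 1 ≤ (G.neighborFinset b).card := Finset.card_pos.mpr ⟨a, hba⟩
        omega
      have hbadAcard : badA.card ≤ Na.card := by
        refine le_trans Finset.card_biUnion_le ?_
        calc ∑ x ∈ Na, (grid.filter (fun c =>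
              ‖Fvec (‖p b - p a‖⁻¹ • (p b - p a)) (A c) (B c) -
                Fvec (‖p x - p a‖⁻¹ • (p x - p a)) (A (f s(a, x))) (B (f s(a, x)))‖ < δ/864)).card
            ≤ ∑ _x ∈ Na, 1 := Finset.sum_le_sum (fun x _ => hfilter1 a b hab _)
          _ = Na.card := by simp
      have hbadBcard : badB.card ≤ Nb.card := by
        refine le_trans Finset.card_biUnion_le ?_
        calc ∑ x ∈ Nb, (grid.filter (fun c =>
              ‖Fvec (‖p a - p b‖⁻¹ • (p a - p b)) (A c) (B c) -
                Fvec (‖p x - p b‖⁻¹ • (p x - p b)) (A (f s(b, x))) (B (f s(b, x)))‖ < δ/864)).card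
            ≤ ∑ _x ∈ Nb, 1 := Finset.sum_le_sum (fun x _ => hfilter1 b a hab.symm _)
          _ = Nb.card := by simp
      have hgridcard : grid.card = (m+1) * (m+1) := by
        rw [hgrid, Finset.card_product, Finset.card_range]
      have h2dm : 2*d < m*m := by
        rw [hm]
        exact Nat.lt_succ_sqrt (2*d)
      have hexc : ∃ c0 ∈ grid, c0 ∉ badA ∪ badB := by
        by_contra hcon
        push_neg at hcon
        have hss : grid ⊆ badA ∪ badB := fun c hc => hcon c hc
        have := Finset.card_le_card hss
        have hcu := Finset.card_union_le badA badB
        rw [hgridcard] at this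
        have hmm1 : m*m ≤ (m+1)*(m+1) := by nlinarith
        omega
      obtain ⟨c0, hc0grid, hc0bad⟩ := hexc
      refine ⟨Function.update f s(a, b) c0, ?_, ?_⟩
      · intro e
        by_cases hee : e = s(a, b)
        · rw [hee, Function.update_self]; exact hc0grid
        · rw [Function.update_of_ne hee]; exact hfgrid e
      · intro v u w hvu hvw huw hmu hmw
        have hedge_ne : s(v, u) ≠ s(v, w) := fun hh => huw (Sym2.congr_right.mp hh)
        rw [Finset.mem_insert] at hmu hmw
        have hupd_old : ∀ x : Sym2 V, x ∈ s → Function.update f s(a, b) c0 x = f x := by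
          intro x hx
          refine Function.update_of_ne (fun hh => he ?_) _ _
          rw [← hh]; exact hx
        rcases hmu with hmu | hmu <;> rcases hmw with hmw | hmw
        · exact absurd (hmu.trans hmw.symm) hedge_ne
        · -- new edge is s(v,u)
          have hfu : Function.update f s(a, b) c0 s(v, u) = c0 := by
            rw [hmu, Function.update_self]
          have hfw : Function.update f s(a, b) c0 s(v, w) = f s(v, w) := hupd_old _ hmw
          rw [hfu, hfw]
          rcases Sym2.eq_iff.mp hmu with ⟨hv, hu⟩ | ⟨hv, hu⟩
          · subst hv; subst hu
            have hwNa : w ∈ Na := by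
              rw [hNadef, Finset.mem_filter, SimpleGraph.mem_neighborFinset]
              exact ⟨hvw, hmw⟩
            by_contra hlt
            push_neg at hlt
            exact hc0bad (Finset.mem_union_left _ (Finset.mem_biUnion.mpr
              ⟨w, hwNa, Finset.mem_filter.mpr ⟨hc0grid, hlt⟩⟩))
          · subst hv; subst hu
            have hwNb : w ∈ Nb := by
              rw [hNbdef, Finset.mem_filter, SimpleGraph.mem_neighborFinset]
              exact ⟨hvw, hmw⟩
            by_contra hlt
            push_neg at hlt
            exact hc0bad (Finset.mem_union_right _ (Finset.mem_biUnion.mpr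
              ⟨w, hwNb, Finset.mem_filter.mpr ⟨hc0grid, hlt⟩⟩))
        · -- new edge is s(v,w)
          have hfw : Function.update f s(a, b) c0 s(v, w) = c0 := by
            rw [hmw, Function.update_self]
          have hfu : Function.update f s(a, b) c0 s(v, u) = f s(v, u) := hupd_old _ hmu
          rw [hfu, hfw, norm_sub_rev]
          rcases Sym2.eq_iff.mp hmw with ⟨hv, hu⟩ | ⟨hv, hu⟩
          · subst hv; subst hu
            have hwNa : u ∈ Na := by
              rw [hNadef, Finset.mem_filter, SimpleGraph.mem_neighborFinset]
              exact ⟨hvu, hmu⟩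
            by_contra hlt
            push_neg at hlt
            exact hc0bad (Finset.mem_union_left _ (Finset.mem_biUnion.mpr
              ⟨u, hwNa, Finset.mem_filter.mpr ⟨hc0grid, hlt⟩⟩))
          · subst hv; subst hu
            have hwNb : u ∈ Nb := by
              rw [hNbdef, Finset.mem_filter, SimpleGraph.mem_neighborFinset]
              exact ⟨hvu, hmu⟩
            by_contra hlt
            push_neg at hlt
            exact hc0bad (Finset.mem_union_right _ (Finset.mem_biUnion.mpr
              ⟨u, hwNb, Finset.mem_filter.mpr ⟨hc0grid, hlt⟩⟩))
        · rw [hupd_old _ hmu, hupd_old _ hmw]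
          exact hfinv v u w hvu hvw huw hmu hmw
  -- endgame
  obtain ⟨f, hfgrid, hfinv⟩ := key G.edgeFinset (by rw [SimpleGraph.coe_edgeFinset])
  refine ⟨fun e => A (f e), fun e => B (f e), ?_, ?_, ?_⟩
  · intro e
    obtain ⟨h1, h2⟩ := hAr (f e) (hfgrid e)
    show A (f e) ∈ Set.Icc 0 (π/4)
    exact ⟨le_trans (by linarith [Real.pi_pos] : (0:ℝ) ≤ π/8) h1, h2⟩
  · intro e
    obtain ⟨h1, h2⟩ := hBr (f e) (hfgrid e)
    show B (f e) ∈ Set.Icc 0 (π/4)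
    exact ⟨h1, by linarith [Real.pi_pos]⟩
  · intro v u w hvu hvw huw
    have hmem1 : s(v, u) ∈ G.edgeFinset := by
      rw [SimpleGraph.mem_edgeFinset, SimpleGraph.mem_edgeSet]; exact hvu
    have hmem2 : s(v, w) ∈ G.edgeFinset := by
      rw [SimpleGraph.mem_edgeFinset, SimpleGraph.mem_edgeSet]; exact hvw
    have hbound := hfinv v u w hvu hvw huw hmem1 hmem2
    have hTu : slantedArcTangentVec p (fun e => A (f e)) (fun e => B (f e))
        (EuclideanSpace.single 2 1) v u =
        Fvec (‖p u - p v‖⁻¹ • (p u - p v)) (A (f s(v, u))) (B (f s(v, u))) := rfl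
    have hTw : slantedArcTangentVec p (fun e => A (f e)) (fun e => B (f e))
        (EuclideanSpace.single 2 1) v w =
        Fvec (‖p w - p v‖⁻¹ • (p w - p v)) (A (f s(v, w))) (B (f s(v, w))) := rfl
    obtain ⟨hwu1, hwu2⟩ := hwdir v u hvu
    obtain ⟨hww1, hww2⟩ := hwdir v w hvw
    have hn1 : ‖Fvec (‖p u - p v‖⁻¹ • (p u - p v)) (A (f s(v, u))) (B (f s(v, u)))‖ = 1 :=
      norm_Fvec _ hwu1 hwu2 _ _
    have hn2 : ‖Fvec (‖p w - p v‖⁻¹ • (p w - p v)) (A (f s(v, w))) (B (f s(v, w)))‖ = 1 :=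
      norm_Fvec _ hww1 hww2 _ _
    have hangle := norm_sub_le_angle _ _ hn1 hn2
    -- numeric bound
    have hsd1 : (1:ℝ) ≤ Real.sqrt d := by
      rw [show (1:ℝ) = Real.sqrt 1 from Real.sqrt_one.symm]
      exact Real.sqrt_le_sqrt (by exact_mod_cast hd)
    have hsd0 : (0:ℝ) < Real.sqrt d := lt_of_lt_of_le one_pos hsd1
    have hmsqrt : (m:ℝ) ≤ 2.5 * Real.sqrt d := by
      have h1 : (Nat.sqrt (2*d) : ℝ) ≤ Real.sqrt (2*(d:ℝ)) := by
        rw [Real.le_sqrt (Nat.cast_nonneg _) (by positivity)]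
        have h0 : Nat.sqrt (2*d) ^ 2 ≤ 2*d := Nat.sqrt_le' (2*d)
        have : ((Nat.sqrt (2*d) ^ 2 : ℕ) : ℝ) ≤ ((2*d : ℕ) : ℝ) := by
          exact_mod_cast h0
        push_cast at this
        nlinarith
      have h2 : Real.sqrt (2*(d:ℝ)) = Real.sqrt 2 * Real.sqrt d :=
        Real.sqrt_mul (by norm_num) _
      have h3 : Real.sqrt 2 ≤ 1.5 := by
        rw [show (1.5:ℝ) = Real.sqrt (1.5^2) from (Real.sqrt_sq (by norm_num)).symm]
        exact Real.sqrt_le_sqrt (by norm_num)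
      have h4 : (m:ℝ) = (Nat.sqrt (2*d) : ℝ) + 1 := by rw [hm]; push_cast; ring
      nlinarith [Real.sqrt_nonneg (d:ℝ)]
    have hnum : (1/10000:ℝ)/Real.sqrt d ≤ δ/864 := by
      have hδ864 : δ/864 = π/(6912*m) := by rw [hδ]; ring
      rw [hδ864, div_le_div_iff₀ hsd0 (by positivity)]
      nlinarith [Real.sqrt_nonneg (d:ℝ)]
    rw [hTu, hTw]
    calc (1/10000:ℝ)/Real.sqrt d ≤ δ/864 := hnum
      _ ≤ _ := hbound
      _ ≤ _ := hangle
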